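/- Let H be an r × n matrix over 𝔽₂ of rank r, and let d⊥ be the minimum Hamming weight of a nonzero element of the row space of H. Then for every subset S ⊆ {1,…,n} with |S| < d⊥, every m ∈ 𝔽₂^r, and every assignment y : S → 𝔽₂, the number of x ∈ 𝔽₂ⁿ satisfying Hx = m and x_i = y_i for all i ∈ S equals 2^{n − r − |S|}. (Within each coset, the restriction to any fewer than d⊥ coordinates is exactly uniform.) -/

import Mathlib

open Matrix Module


/-- **Exact uniformity of few coordinates within each coset.**

`H` is an `r × n` matrix over `𝔽₂` of rank `r` (`x ↦ H x` surjective), and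
`dperp` is a lower bound on the Hamming weight of the nonzero elements of the
row space of `H` (the dual code `C⊥`).  Then for every subset `S` of positions
with `|S| < dperp`, every message `m ∈ 𝔽₂^r`, and every assignment
`y : S → 𝔽₂`, the number of `x ∈ 𝔽₂ⁿ` with `H x = m` and `x i = y i` for all
`i ∈ S` equals `2 ^ (n - r - |S|)`. -/
theorem coset_restriction_uniform
    {r n : ℕ} (H : Matrix (Fin r) (Fin n) (ZMod 2)) (dperp : ℕ)
    (hd : ∀ y : Fin r → ZMod 2, Matrix.vecMul y H ≠ 0 →
      dperp ≤ hammingNorm (Matrix.vecMul y H))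
    (hrank : Function.Surjective (fun x : Fin n → ZMod 2 => H.mulVec x))
    (S : Finset (Fin n)) (hS : S.card < dperp)
    (m : Fin r → ZMod 2) (y : Fin n → ZMod 2) :
    Nat.card {x : Fin n → ZMod 2 // H.mulVec x = m ∧ ∀ i ∈ S, x i = y i}
      = 2 ^ (n - r - S.card) := by
  classical
  set ρ : (Fin n → ZMod 2) →ₗ[ZMod 2] (S → ZMod 2) :=
    LinearMap.funLeft (ZMod 2) (ZMod 2) Subtype.val with hρ
  set Φ : (Fin n → ZMod 2) →ₗ[ZMod 2] ((Fin r → ZMod 2) × (S → ZMod 2)) :=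
    (Matrix.mulVecLin H).prod ρ with hΦdef
  -- Step A: Φ is surjective
  have hΦsurj : Function.Surjective Φ := by
    rw [← LinearMap.range_eq_top]
    by_contra hne
    obtain ⟨f, hf0, hfbot⟩ := Submodule.exists_dual_map_eq_bot_of_lt_top
      (p := LinearMap.range Φ) (lt_top_iff_ne_top.mpr hne) inferInstance
    have hker : ∀ x, f (Φ x) = 0 := by
      intro x
      have : f (Φ x) ∈ (LinearMap.range Φ).map f := ⟨Φ x, ⟨x, rfl⟩, rfl⟩
      rw [hfbot] at this; exact (Submodule.mem_bot (ZMod 2)).mp this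
    set u : Fin r → ZMod 2 := fun j => f ((fun k => if j = k then 1 else 0), 0) with hu
    set v : {i // i ∈ S} → ZMod 2 := fun i => f (0, fun k => if i = k then 1 else 0) with hv
    set w : Fin n → ZMod 2 := fun j => if h : j ∈ S then v ⟨j, h⟩ else 0 with hw
    have hwS : ∀ i : S, w i = v i := by
      intro i; simp [hw]
    -- decomposition of f
    have hdec : ∀ (a : Fin r → ZMod 2) (b : S → ZMod 2),
        f (a, b) = (∑ j, a j * u j) + ∑ i, b i * v i := by
      intro a b
      have h1 : (a, b) = ((a, 0) : _ × _) + (0, b) := by simp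
      rw [h1, map_add]
      have g1 : f (a, 0) = ∑ j, a j * u j := by
        have := LinearMap.pi_apply_eq_sum_univ
          (f.comp (LinearMap.inl (ZMod 2) _ _)) a
        simpa [smul_eq_mul, hu] using this
      have g2 : f ((0 : Fin r → ZMod 2), b) = ∑ i, b i * v i := by
        have := LinearMap.pi_apply_eq_sum_univ
          (f.comp (LinearMap.inr (ZMod 2) _ _)) b
        simpa [smul_eq_mul, hv] using this
      rw [g1, g2]
    -- key identity
    have hkey : ∀ x : Fin n → ZMod 2, Matrix.vecMul u H ⬝ᵥ x + w ⬝ᵥ x = 0 := by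
      intro x
      have h0 := hker x
      have hΦx : Φ x = (H.mulVec x, fun i : S => x i) := rfl
      rw [hΦx, hdec] at h0
      have e1 : (∑ j, H.mulVec x j * u j) = Matrix.vecMul u H ⬝ᵥ x := by
        rw [← Matrix.dotProduct_mulVec]
        simp [dotProduct, mul_comm]
      have e2 : (∑ i : S, x i * v i) = w ⬝ᵥ x := by
        rw [dotProduct]
        rw [← Finset.sum_filter_add_sum_filter_not Finset.univ (· ∈ S)]
        have : (∑ j ∈ Finset.univ.filter (¬ · ∈ S), w j * x j) = 0 := by
          apply Finset.sum_eq_zero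
          intro j hj
          simp only [Finset.mem_filter] at hj
          simp [hw, hj.2]
        rw [this, add_zero]
        have hfil : Finset.univ.filter (· ∈ S) = S := by
          ext j; simp
        rw [hfil, ← Finset.sum_attach S (fun j => w j * x j),
          Finset.univ_eq_attach]
        apply Finset.sum_congr rfl
        intro i _
        rw [hwS, mul_comm]
      rw [e1, e2] at h0
      exact h0
    have hsum : Matrix.vecMul u H + w = 0 := by
      funext j
      have := hkey (Pi.single j 1)
      rwa [dotProduct_single, dotProduct_single, mul_one, mul_one,
        ← Pi.add_apply] at this
    have hw0 : Matrix.vecMul u H = w := by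
      have : Matrix.vecMul u H = -w := by
        rw [eq_neg_iff_add_eq_zero]; exact hsum
      rw [this]; funext j; exact CharTwo.neg_eq _
    by_cases huH : Matrix.vecMul u H = 0
    · -- then w = 0, v = 0, u = 0, f = 0
      have hww : w = 0 := by rw [← hw0]; exact huH
      have hv0 : v = 0 := by
        funext i; rw [← hwS]; simp [hww]
      have hu0 : u = 0 := by
        funext j
        obtain ⟨x, hx⟩ := hrank (Pi.single j 1)
        have : u ⬝ᵥ Pi.single j 1 = Matrix.vecMul u H ⬝ᵥ x := by
          simp only at hx
          rw [← hx, Matrix.dotProduct_mulVec]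
        rw [dotProduct_single, mul_one, huH, zero_dotProduct] at this
        exact this
      apply hf0
      apply LinearMap.ext
      intro p
      obtain ⟨a, b⟩ := p
      rw [hdec a b, hu0, hv0]
      simp
    · -- weight contradiction
      have h1 := hd u huH
      have h2 : hammingNorm (Matrix.vecMul u H) ≤ S.card := by
        rw [hw0]
        unfold hammingNorm
        apply Finset.card_le_card
        intro j hj
        simp only [Finset.mem_filter] at hj ⊢
        by_contra hjS
        exact hj.2 (by simp [hw, hjS])
      omega
  -- Step B: the fiber is in bijection with ker Φ
  obtain ⟨x0, hx0⟩ := hΦsurj (m, fun i : S => y i)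
  have hx0m : H.mulVec x0 = m := congrArg Prod.fst hx0
  have hx0S : ∀ i : S, x0 i = y i := by
    intro i
    have := congrArg Prod.snd hx0
    exact congrFun this i
  have e : {x : Fin n → ZMod 2 // H.mulVec x = m ∧ ∀ i ∈ S, x i = y i} ≃
      LinearMap.ker Φ := by
    refine ⟨fun x => ⟨x.1 - x0, ?_⟩, fun c => ⟨c.1 + x0, ?_⟩, ?_, ?_⟩
    · rw [LinearMap.mem_ker, map_sub]
      have h1 : Φ x.1 = (m, fun i : S => y i) := by
        have := x.2
        apply Prod.ext
        · exact this.1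
        · funext i; exact this.2 i i.2
      rw [h1, hx0, sub_self]
    · have hc := c.2
      rw [LinearMap.mem_ker] at hc
      have := map_add Φ c.1 x0
      rw [hc, zero_add, hx0] at this
      constructor
      · exact congrArg Prod.fst this
      · intro i hi
        have h2 := congrFun (congrArg Prod.snd this) ⟨i, hi⟩
        exact h2
    · intro x; ext1; simp
    · intro c; ext1; simp
  rw [Nat.card_congr e]
  -- Step C: count the kernel
  have hcard : Nat.card (LinearMap.ker Φ)
      = Fintype.card (ZMod 2) ^ finrank (ZMod 2) (LinearMap.ker Φ) := by
    rw [Nat.card_eq_fintype_card]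
    exact card_eq_pow_finrank
  have hrange : finrank (ZMod 2) (LinearMap.range Φ) = r + S.card := by
    rw [LinearMap.range_eq_top.mpr hΦsurj, finrank_top, finrank_prod,
      finrank_pi, finrank_pi]
    simp
  have hfr := LinearMap.finrank_range_add_finrank_ker Φ
  rw [hrange, finrank_pi] at hfr
  simp only [Fintype.card_fin] at hfr
  have hk : finrank (ZMod 2) (LinearMap.ker Φ) = n - r - S.card := by omega
  rw [hcard, hk, ZMod.card]
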